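/- There exist finite sets C, D ⊆ 𝔽₂^20 such that: every element of C has Hamming weight exactly 8; any two distinct elements of C have Hamming distance at least 8; |C| = 130; any two distinct elements of D have Hamming distance at least 5; |D| = 2048; and every d ∈ D satisfies Σᵢ dᵢcᵢ = 0 in 𝔽₂ for every c ∈ C. -/

import Mathlib

namespace Golay20

def gensD : List Nat := [6143, 12002, 19909, 35723, 69398, 134701, 265307, 526519, 2414, 2780, 3512]

def gensC : List Nat := [6143, 12002, 19909, 35723, 69398, 134701, 265307, 526519]

def mList : List Nat := [2, 3, 4, 5, 6, 7, 8, 9, 10, 11, 12, 13, 14, 16, 17, 18, 19, 20, 21, 22, 24, 25, 27, 28, 31, 32, 33, 34, 35, 36, 37, 38, 40, 41, 42, 44, 46, 48, 49, 51, 53, 54, 56, 58, 61, 64, 65, 66, 67, 68, 69, 71, 72, 73, 74, 76, 79, 80, 81, 83, 84, 86, 88, 90, 92, 96, 97, 98, 101, 102, 105, 107, 108, 112, 114, 116, 121, 122, 128, 129, 130, 131, 132, 133, 134, 136, 137, 139, 141, 142, 144, 145, 146, 148, 150, 152, 154, 157, 160, 161, 162, 165, 167, 168, 171, 172, 176, 179,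 180, 184, 190, 192, 193, 194, 196, 199, 201, 202, 204, 206, 209, 210, 213, 216, 224, 226, 228, 232, 241, 244]

def toVec (n : Nat) : Fin 20 → ZMod 2 := fun i => if n.testBit i.val then 1 else 0

def wt (n : Nat) : Nat := (List.range 20).countP n.testBit

def enc : List Nat → Nat → Nat
  | [], _ => 0
  | g :: gs, m => (if m.testBit 0 then g else 0) ^^^ enc gs (m >>> 1)

set_option maxRecDepth 4000 in
theorem FC1 : ∀ m ∈ mList, wt (enc gensC m) = 8 := by decide

set_option maxRecDepth 4000 in
theorem FC2 : ∀ k ∈ List.range 256, k ≠ 0 → 8 ≤ wt (enc gensC k) := by decide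

set_option maxRecDepth 4000 in
theorem FC3 : mList.Nodup := by decide

set_option maxRecDepth 4000 in
theorem FC4 : ∀ m ∈ mList, m < 256 := by decide

theorem FgD : ∀ g ∈ gensD, g < 2 ^ 20 := by decide

theorem FgC : ∀ g ∈ gensC, g < 2 ^ 20 := by decide

theorem F6 : ∀ g ∈ gensD, ∀ h ∈ gensC, wt (g &&& h) % 2 = 0 := by decide

set_option maxRecDepth 4000 in
theorem FD0 : ∀ k ∈ List.range 256, k ≠ 0 → 5 ≤ wt (enc gensD k) := by decide
set_option maxRecDepth 4000 in
theorem FD1 : ∀ k ∈ List.range 256, 5 ≤ wt (enc gensD (256 * 1 + k)) := by decide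
set_option maxRecDepth 4000 in
theorem FD2 : ∀ k ∈ List.range 256, 5 ≤ wt (enc gensD (256 * 2 + k)) := by decide
set_option maxRecDepth 4000 in
theorem FD3 : ∀ k ∈ List.range 256, 5 ≤ wt (enc gensD (256 * 3 + k)) := by decide
set_option maxRecDepth 4000 in
theorem FD4 : ∀ k ∈ List.range 256, 5 ≤ wt (enc gensD (256 * 4 + k)) := by decide
set_option maxRecDepth 4000 in
theorem FD5 : ∀ k ∈ List.range 256, 5 ≤ wt (enc gensD (256 * 5 + k)) := by decide
set_option maxRecDepth 4000 in
theorem FD6 : ∀ k ∈ List.range 256, 5 ≤ wt (enc gensD (256 * 6 + k)) := by decide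
set_option maxRecDepth 4000 in
theorem FD7 : ∀ k ∈ List.range 256, 5 ≤ wt (enc gensD (256 * 7 + k)) := by decide

theorem FD : ∀ k < 2048, k ≠ 0 → 5 ≤ wt (enc gensD k) := by
  intro k hk hk0
  have hq : k / 256 < 8 := by omega
  have hr : k % 256 < 256 := by omega
  have hk' : k = 256 * (k / 256) + k % 256 := by omega
  have hmem : k % 256 ∈ List.range 256 := List.mem_range.mpr hr
  interval_cases h : k / 256
  · exact hk' ▸ (by simpa using FD0 (k % 256) hmem (by omega))
  · exact hk' ▸ FD1 (k % 256) hmem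
  · exact hk' ▸ FD2 (k % 256) hmem
  · exact hk' ▸ FD3 (k % 256) hmem
  · exact hk' ▸ FD4 (k % 256) hmem
  · exact hk' ▸ FD5 (k % 256) hmem
  · exact hk' ▸ FD6 (k % 256) hmem
  · exact hk' ▸ FD7 (k % 256) hmem

theorem toVec_zero : toVec 0 = 0 := by
  funext i; simp [toVec]

theorem toVec_xor (a b : Nat) : toVec (a ^^^ b) = toVec a + toVec b := by
  funext i
  simp only [toVec, Nat.testBit_xor, Pi.add_apply]
  cases a.testBit i.val <;> cases b.testBit i.val <;> simp <;> decide

theorem toVec_sub (a b : Nat) : toVec a - toVec b = toVec (a ^^^ b) := by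
  rw [toVec_xor, sub_eq_add_neg]
  congr 1
  funext i
  simp only [Pi.neg_apply]
  exact (show ∀ z : ZMod 2, -z = z by decide) _

theorem shiftRight_one_xor (a b : Nat) : (a ^^^ b) >>> 1 = a >>> 1 ^^^ b >>> 1 :=
  Nat.eq_of_testBit_eq (by intro i; simp)

theorem enc_xor (gs : List Nat) (a b : Nat) :
    enc gs (a ^^^ b) = enc gs a ^^^ enc gs b := by
  induction gs generalizing a b with
  | nil => simp [enc]
  | cons g gs ih =>
    apply Nat.eq_of_testBit_eq
    intro i
    simp only [enc, Nat.testBit_xor, shiftRight_one_xor, ih]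
    cases a.testBit 0 <;> cases b.testBit 0 <;>
      cases hg : g.testBit i <;>
      cases hA : (enc gs (a >>> 1)).testBit i <;>
      cases hB : (enc gs (b >>> 1)).testBit i <;>
      simp [hg, hA, hB]

theorem enc_lt (gs : List Nat) (h : ∀ g ∈ gs, g < 2 ^ 20) (m : Nat) :
    enc gs m < 2 ^ 20 := by
  induction gs generalizing m with
  | nil => simp [enc]
  | cons g gs ih =>
    simp only [enc]
    apply Nat.xor_lt_two_pow _ (ih (fun g' hg' => h g' (by simp [hg'])) _)
    split
    · exact h g (by simp)
    · positivity

theorem toVec_inj {a b : Nat} (ha : a < 2 ^ 20) (hb : b < 2 ^ 20)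
    (h : toVec a = toVec b) : a = b := by
  apply Nat.eq_of_testBit_eq
  intro i
  by_cases hi : i < 20
  · have := congrFun h ⟨i, hi⟩
    simp only [toVec] at this
    cases hA : a.testBit i <;> cases hB : b.testBit i <;> simp_all
  · have h20 : (2 : Nat) ^ 20 ≤ 2 ^ i := Nat.pow_le_pow_right (by norm_num) (by omega)
    rw [Nat.testBit_lt_two_pow (lt_of_lt_of_le ha h20),
      Nat.testBit_lt_two_pow (lt_of_lt_of_le hb h20)]

theorem count_aux (n : Nat) (p : Nat → Bool) :
    (∑ i ∈ Finset.range n, if p i then 1 else 0) = (List.range n).countP p := by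
  induction n with
  | zero => simp
  | succ n ih =>
    rw [Finset.sum_range_succ, List.range_succ, List.countP_append, ih,
      List.countP_cons]
    cases h : p n <;> simp [h] <;> omega

theorem card_filter_univ (p : Nat → Bool) :
    (Finset.univ.filter fun i : Fin 20 => p i.val = true).card
      = (List.range 20).countP p := by
  rw [Finset.card_filter, Fin.sum_univ_eq_sum_range (fun i => if p i then 1 else 0),
    count_aux]

theorem norm_toVec (n : Nat) : hammingNorm (toVec n) = wt n := by
  have h : ∀ i : Fin 20, (toVec n i ≠ 0) ↔ (n.testBit i.val = true) := by
    intro i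
    simp only [toVec]
    cases n.testBit i.val <;> simp <;> decide
  unfold hammingNorm
  rw [Finset.filter_congr (fun i _ => h i), card_filter_univ]
  rfl

theorem dist_toVec (a b : Nat) :
    hammingDist (toVec a) (toVec b) = wt (a ^^^ b) := by
  rw [hammingDist_comm, hammingDist_eq_hammingNorm, neg_add_eq_sub, toVec_sub, norm_toVec]

theorem sum_toVec (a c : Nat) :
    (∑ i : Fin 20, toVec a i * toVec c i) = ((wt (a &&& c) : Nat) : ZMod 2) := by
  have h : ∀ i : Fin 20,
      toVec a i * toVec c i = if (a &&& c).testBit i.val = true then (1 : ZMod 2) else 0 := by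
    intro i
    simp only [toVec, Nat.testBit_and]
    cases a.testBit i.val <;> cases c.testBit i.val <;> simp
  rw [Finset.sum_congr rfl fun i _ => h i, Finset.sum_boole, card_filter_univ]
  rfl

theorem ortho_even {g c : Nat} (h : wt (g &&& c) % 2 = 0) :
    (∑ i : Fin 20, toVec g i * toVec c i) = 0 := by
  rw [sum_toVec, ZMod.natCast_eq_zero_iff]
  exact Nat.dvd_of_mod_eq_zero h

theorem sum_comm' (a c : Nat) :
    (∑ i : Fin 20, toVec a i * toVec c i) = ∑ i : Fin 20, toVec c i * toVec a i := by
  exact Finset.sum_congr rfl fun i _ => mul_comm _ _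

theorem ortho_enc (gs : List Nat) (c : Nat)
    (h : ∀ g ∈ gs, (∑ i : Fin 20, toVec g i * toVec c i) = 0) (m : Nat) :
    (∑ i : Fin 20, toVec (enc gs m) i * toVec c i) = 0 := by
  induction gs generalizing m with
  | nil => simp [enc, toVec_zero]
  | cons g gs ih =>
    have ih' := ih (fun g' hg' => h g' (by simp [hg'])) (m >>> 1)
    simp only [enc, toVec_xor, Pi.add_apply, add_mul, Finset.sum_add_distrib, ih',
      add_zero]
    by_cases hb : m.testBit 0
    · simpa [hb] using h g (by simp)
    · simp [hb, toVec_zero]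

theorem encC_inj {m m' : Nat} (hm : m < 256) (hm' : m' < 256)
    (h : toVec (enc gensC m) = toVec (enc gensC m')) : m = m' := by
  by_contra hne
  have e1 : enc gensC m = enc gensC m' :=
    toVec_inj (enc_lt _ FgC _) (enc_lt _ FgC _) h
  have e2 : enc gensC (m ^^^ m') = 0 := by
    rw [enc_xor, e1, Nat.xor_self]
  have hk : m ^^^ m' ≠ 0 := fun h0 => hne (xor_eq_zero_iff.mp h0)
  have hlt : m ^^^ m' < 256 := by
    have := Nat.xor_lt_two_pow (n := 8) (by simpa using hm) (by simpa using hm')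
    simpa using this
  have := FC2 (m ^^^ m') (List.mem_range.mpr hlt) hk
  rw [e2] at this
  exact absurd this (by decide)

theorem encD_inj {m m' : Nat} (hm : m < 2048) (hm' : m' < 2048)
    (h : toVec (enc gensD m) = toVec (enc gensD m')) : m = m' := by
  by_contra hne
  have e1 : enc gensD m = enc gensD m' :=
    toVec_inj (enc_lt _ FgD _) (enc_lt _ FgD _) h
  have e2 : enc gensD (m ^^^ m') = 0 := by
    rw [enc_xor, e1, Nat.xor_self]
  have hk : m ^^^ m' ≠ 0 := fun h0 => hne (xor_eq_zero_iff.mp h0)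
  have hlt : m ^^^ m' < 2048 := by
    have := Nat.xor_lt_two_pow (n := 11) (by simpa using hm) (by simpa using hm')
    simpa using this
  have := FD (m ^^^ m') hlt hk
  rw [e2] at this
  exact absurd this (by decide)

end Golay20

open Golay20 in
/-- There exist codes `C, D ⊆ 𝔽₂^20` such that every element of `C` has Hamming
weight exactly 8, distinct elements of `C` are at Hamming distance at least 8,
`|C| = 130`, distinct elements of `D` are at Hamming distance at least 5,
`|D| = 2048`, and every element of `D` is orthogonal (mod 2) to every element of `C`. -/
theorem exists_codes_dim20 :
    ∃ C D : Finset (Fin 20 → ZMod 2),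
      (∀ c ∈ C, hammingNorm c = 8) ∧
      (∀ c ∈ C, ∀ c' ∈ C, c ≠ c' → 8 ≤ hammingDist c c') ∧
      C.card = 130 ∧
      (∀ d ∈ D, ∀ d' ∈ D, d ≠ d' → 5 ≤ hammingDist d d') ∧
      D.card = 2048 ∧
      (∀ d ∈ D, ∀ c ∈ C, (∑ i : Fin 20, d i * c i) = 0) := by
  classical
  refine ⟨(mList.map fun m => toVec (enc gensC m)).toFinset,
    ((List.range 2048).map fun m => toVec (enc gensD m)).toFinset, ?_, ?_, ?_, ?_, ?_, ?_⟩
  · intro c hc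
    rw [List.mem_toFinset, List.mem_map] at hc
    obtain ⟨m, hm, rfl⟩ := hc
    rw [norm_toVec]
    exact FC1 m hm
  · intro c hc c' hc' hne
    rw [List.mem_toFinset, List.mem_map] at hc hc'
    obtain ⟨m, hm, rfl⟩ := hc
    obtain ⟨m', hm', rfl⟩ := hc'
    have hmne : m ≠ m' := fun h => hne (by rw [h])
    rw [dist_toVec, ← enc_xor]
    have hlt : m ^^^ m' < 256 := by
      have := Nat.xor_lt_two_pow (n := 8) (by simpa using FC4 m hm)
        (by simpa using FC4 m' hm')
      simpa using this
    exact FC2 (m ^^^ m') (List.mem_range.mpr hlt)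
      (fun h0 => hmne (xor_eq_zero_iff.mp h0))
  · rw [List.toFinset_card_of_nodup]
    · simp [mList]
    · exact FC3.map_on fun m hm m' hm' h =>
        encC_inj (FC4 m hm) (FC4 m' hm') h
  · intro d hd d' hd' hne
    rw [List.mem_toFinset, List.mem_map] at hd hd'
    obtain ⟨m, hm, rfl⟩ := hd
    obtain ⟨m', hm', rfl⟩ := hd'
    rw [List.mem_range] at hm hm'
    have hmne : m ≠ m' := fun h => hne (by rw [h])
    rw [dist_toVec, ← enc_xor]
    have hlt : m ^^^ m' < 2048 := by
      have := Nat.xor_lt_two_pow (n := 11) (by simpa using hm) (by simpa using hm')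
      simpa using this
    exact FD (m ^^^ m') hlt (fun h0 => hmne (xor_eq_zero_iff.mp h0))
  · rw [List.toFinset_card_of_nodup]
    · simp
    · exact (List.nodup_range (n := 2048)).map_on fun m hm m' hm' h =>
        encD_inj (List.mem_range.mp hm) (List.mem_range.mp hm') h
  · intro d hd c hc
    rw [List.mem_toFinset, List.mem_map] at hd hc
    obtain ⟨m, hm, rfl⟩ := hd
    obtain ⟨m', hm', rfl⟩ := hc
    apply ortho_enc
    intro g hg
    rw [sum_comm']
    apply ortho_enc
    intro h hh
    rw [sum_comm']
    exact ortho_even (F6 g hg h hh)
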